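/- arXiv:2006.11822 — 6 statements merged into one kernel-verified Lean document; each statement's English description precedes it below -/
import Mathlib

section
/- If p is a purely imaginary octonion, then for all octonions q, r one has [p, pq, r] = -p·[p, q, r]. -/
noncomputable section

open Quaternion

/-- The octonions, via the Cayley–Dickson construction on the quaternions. -/
def Octonion : Type := ℍ[ℝ] × ℍ[ℝ]

namespace Octonion

instance : AddCommGroup Octonion := inferInstanceAs (AddCommGroup (ℍ[ℝ] × ℍ[ℝ]))
instance : Module ℝ Octonion := inferInstanceAs (Module ℝ (ℍ[ℝ] × ℍ[ℝ]))

instance : One Octonion := ⟨((1 : ℍ[ℝ]), (0 : ℍ[ℝ]))⟩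
instance : Mul Octonion :=
  ⟨fun x y => (x.1 * y.1 - star y.2 * x.2, y.2 * x.1 + x.2 * star y.1)⟩
/-- Octonionic conjugation. -/
instance : Star Octonion := ⟨fun x => (star x.1, -x.2)⟩

/-- The associator `[a,b,c] = (ab)c - a(bc)`. -/
def assoc (a b c : Octonion) : Octonion := a * b * c - a * (b * c)

/-- The standard imaginary units `e 0 = e₁, …, e 6 = e₇`. -/
def e : Fin 7 → Octonion
  | 0 => ((⟨0,1,0,0⟩ : ℍ[ℝ]), 0)
  | 1 => ((⟨0,0,1,0⟩ : ℍ[ℝ]), 0)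
  | 2 => ((⟨0,0,0,1⟩ : ℍ[ℝ]), 0)
  | 3 => (0, (1 : ℍ[ℝ]))
  | 4 => (0, (⟨0,1,0,0⟩ : ℍ[ℝ]))
  | 5 => (0, (⟨0,0,1,0⟩ : ℍ[ℝ]))
  | 6 => (0, (⟨0,0,0,1⟩ : ℍ[ℝ]))

end Octonion

/-- A left `𝕆`-module: a real vector space with an `ℝ`-bilinear octonion action
satisfying `1 • m = m` and the alternating rule. -/
structure LeftOModule (M : Type) [AddCommGroup M] [Module ℝ M] where
  smul : Octonion →ₗ[ℝ] M →ₗ[ℝ] M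
  one_smul : ∀ m : M, smul 1 m = m
  alt : ∀ (p q : Octonion) (m : M),
    smul (p * q) m - smul p (smul q m) = -(smul (q * p) m - smul q (smul p m))

/-- An `𝕆`-bimodule: compatible left and right `𝕆`-module structures with
`[p,q,m] = [q,m,p] = [m,p,q]`.  Here `l p m` is `p * m` and `r p m` is `m * p`. -/
structure OBimodule (M : Type) [AddCommGroup M] [Module ℝ M] where
  l : Octonion →ₗ[ℝ] M →ₗ[ℝ] M
  r : Octonion →ₗ[ℝ] M →ₗ[ℝ] M
  one_l : ∀ m : M, l 1 m = m
  one_r : ∀ m : M, r 1 m = m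
  /-- left alternating rule `[p,q,m] = -[q,p,m]` -/
  alt_l : ∀ (p q : Octonion) (m : M),
    l (p * q) m - l p (l q m) = -(l (q * p) m - l q (l p m))
  /-- right alternating rule `[m,p,q] = -[m,q,p]` -/
  alt_r : ∀ (p q : Octonion) (m : M),
    r q (r p m) - r (p * q) m = -(r p (r q m) - r (q * p) m)
  /-- `[p,q,m] = [q,m,p]` -/
  comp_lm : ∀ (p q : Octonion) (m : M),
    l (p * q) m - l p (l q m) = r p (l q m) - l q (r p m)
  /-- `[p,q,m] = [m,p,q]` -/
  comp_rm : ∀ (p q : Octonion) (m : M),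
    l (p * q) m - l p (l q m) = r q (r p m) - r (p * q) m

lemma omul_aux (x y : Octonion) :
    x * y = (x.1 * y.1 - star y.2 * x.2, y.2 * x.1 + x.2 * star y.1) := rfl
lemma oneg_aux (x : Octonion) : -x = (-x.1, -x.2) := rfl
lemma osub_aux (x y : Octonion) : x - y = (x.1 - y.1, x.2 - y.2) := rfl
lemma ofst_mul (x y : Octonion) : (x * y).1 = x.1 * y.1 - star y.2 * x.2 := rfl
lemma osnd_mul (x y : Octonion) : (x * y).2 = y.2 * x.1 + x.2 * star y.1 := rfl
lemma ofst_sub (x y : Octonion) : (x - y).1 = x.1 - y.1 := rfl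
lemma osnd_sub (x y : Octonion) : (x - y).2 = x.2 - y.2 := rfl
lemma ofst_neg (x : Octonion) : (-x).1 = -x.1 := rfl
lemma osnd_neg (x : Octonion) : (-x).2 = -x.2 := rfl
lemma oext_aux (x y : Octonion) : x = y ↔ x.1 = y.1 ∧ x.2 = y.2 := Prod.ext_iff

set_option maxHeartbeats 4000000 in
/-- If `p` is purely imaginary then `[p, pq, r] = -p·[p,q,r]`. -/
theorem octonion_assoc_p_pq_r (p : Octonion) (hp : star p = -p) (q r : Octonion) :
    Octonion.assoc p (p * q) r = -(p * Octonion.assoc p q r) := by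
  simp only [Octonion.assoc, oext_aux, ofst_mul, osnd_mul, ofst_sub, osnd_sub, ofst_neg, osnd_neg]
  obtain ⟨p1, p2⟩ := p
  obtain ⟨q1, q2⟩ := q
  obtain ⟨r1, r2⟩ := r
  have h1 : star p1 = -p1 := congrArg Prod.fst hp
  have hre : p1.re = 0 := by
    have := congrArg QuaternionAlgebra.re h1
    simp at this; linarith
  refine ⟨?_, ?_⟩ <;>
  · ext <;>
    simp only [Quaternion.re_mul, Quaternion.imI_mul, Quaternion.imJ_mul,
      Quaternion.imK_mul, Quaternion.re_star, Quaternion.imI_star, Quaternion.imJ_star,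
      Quaternion.imK_star, Quaternion.re_sub, Quaternion.imI_sub, Quaternion.imJ_sub,
      Quaternion.imK_sub, Quaternion.re_neg, Quaternion.imI_neg, Quaternion.imJ_neg,
      Quaternion.imK_neg, Quaternion.re_add, Quaternion.imI_add, Quaternion.imJ_add,
      Quaternion.imK_add, hre] <;>
    ring
end
end

section
/- In a left 𝕆-module M, the left-multiplication operators L_{e_i} by the imaginary octonion units satisfy the Clifford relations L_{e_i}L_{e_j} + L_{e_j}L_{e_i} = -2δ_{ij}·Id for 1 ≤ i, j ≤ 7. -/
noncomputable section

open Quaternion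

namespace Octonion

lemma mul_def' (x y : Octonion) :
    x * y = (x.1 * y.1 - star y.2 * x.2, y.2 * x.1 + x.2 * star y.1) := rfl
lemma one_def' : (1 : Octonion) = ((1 : ℍ[ℝ]), (0 : ℍ[ℝ])) := rfl
lemma add_def' (x y : Octonion) : x + y = (x.1 + y.1, x.2 + y.2) := rfl
lemma neg_def' (x : Octonion) : -x = (-x.1, -x.2) := rfl
lemma smul_def' (c : ℝ) (x : Octonion) : c • x = (c • x.1, c • x.2) := rfl
lemma zero_def' : (0 : Octonion) = ((0 : ℍ[ℝ]), (0 : ℍ[ℝ])) := rfl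
lemma e_0' : e 0 = ((⟨0,1,0,0⟩ : ℍ[ℝ]), 0) := rfl
lemma e_1' : e 1 = ((⟨0,0,1,0⟩ : ℍ[ℝ]), 0) := rfl
lemma e_2' : e 2 = ((⟨0,0,0,1⟩ : ℍ[ℝ]), 0) := rfl
lemma e_3' : e 3 = (0, (1 : ℍ[ℝ])) := rfl
lemma e_4' : e 4 = (0, (⟨0,1,0,0⟩ : ℍ[ℝ])) := rfl
lemma e_5' : e 5 = (0, (⟨0,0,1,0⟩ : ℍ[ℝ])) := rfl
lemma e_6' : e 6 = (0, (⟨0,0,0,1⟩ : ℍ[ℝ])) := rfl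
lemma fst_add' (x y : Octonion) : (x + y).1 = x.1 + y.1 := rfl
lemma snd_add' (x y : Octonion) : (x + y).2 = x.2 + y.2 := rfl
lemma fst_mul' (x y : Octonion) : (x * y).1 = x.1 * y.1 - star y.2 * x.2 := rfl
lemma snd_mul' (x y : Octonion) : (x * y).2 = y.2 * x.1 + x.2 * star y.1 := rfl
lemma fst_smul' (c : ℝ) (x : Octonion) : (c • x).1 = c • x.1 := rfl
lemma snd_smul' (c : ℝ) (x : Octonion) : (c • x).2 = c • x.2 := rfl

set_option maxHeartbeats 8000000 in
lemma e_mul_add_mul_e (i j : Fin 7) : e i * e j + e j * e i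
    = if i = j then (-2 : ℝ) • (1 : Octonion) else 0 := by
  fin_cases i <;> fin_cases j <;>
    refine Prod.ext ?_ ?_ <;>
    simp only [fst_add', snd_add', fst_mul', snd_mul', fst_smul', snd_smul',
      Fin.isValue, reduceIte, Fin.mk.injEq, Fin.reduceEq] <;>
    simp only [one_def', zero_def'] <;>
    ext <;>
    simp [Quaternion.re_mul, Quaternion.imI_mul, Quaternion.imJ_mul, Quaternion.imK_mul,
      Quaternion.re_star, Quaternion.imI_star, Quaternion.imJ_star, Quaternion.imK_star] <;>
    simp [e_0', e_1', e_2', e_3', e_4', e_5', e_6'] <;>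
    norm_num

end Octonion

/-- In a left `𝕆`-module the operators `L_{e_i}` satisfy the Clifford relations
`L_{e_i}L_{e_j} + L_{e_j}L_{e_i} = -2δ_{ij}·Id`. -/
theorem leftOModule_clifford_relations {M : Type} [AddCommGroup M] [Module ℝ M]
    (σ : LeftOModule M) (i j : Fin 7) (m : M) :
    σ.smul (Octonion.e i) (σ.smul (Octonion.e j) m) +
      σ.smul (Octonion.e j) (σ.smul (Octonion.e i) m) =
    if i = j then (-2 : ℝ) • m else 0 := by
  have key : σ.smul (Octonion.e i) (σ.smul (Octonion.e j) m)
      + σ.smul (Octonion.e j) (σ.smul (Octonion.e i) m)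
      = σ.smul (Octonion.e i * Octonion.e j + Octonion.e j * Octonion.e i) m := by
    have h := σ.alt (Octonion.e i) (Octonion.e j) m
    rw [neg_sub] at h
    have h2 := sub_eq_sub_iff_add_eq_add.mp h
    rw [map_add, LinearMap.add_apply]
    rw [h2]; abel
  rw [key, Octonion.e_mul_add_mul_e]
  split
  · rw [map_smul, LinearMap.smul_apply, σ.one_smul]
  · simp
end
end

section
/- The real vector space 𝕆 with scalar multiplication p ⋆ m := p̄·m (octonionic multiplication by the conjugate) is a left 𝕆-module, i.e., 1 ⋆ m = m and (pq) ⋆ m - p ⋆ (q ⋆ m) = -((qp) ⋆ m - q ⋆ (p ⋆ m)) for all p, q, m ∈ 𝕆. -/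
noncomputable section

open Quaternion

/-- The conjugate action `p ⋆ m = p̄·m` makes `𝕆` into a left `𝕆`-module:
`1 ⋆ m = m` and the alternating rule holds. -/
theorem conj_module_is_leftOModule :
    (∀ m : Octonion, star (1 : Octonion) * m = m) ∧
    (∀ p q m : Octonion,
      star (p * q) * m - star p * (star q * m) =
        -(star (q * p) * m - star q * (star p * m))) := 
  by
  have mul_def : ∀ x y : Octonion,
      x * y = (x.1 * y.1 - star y.2 * x.2, y.2 * x.1 + x.2 * star y.1) := fun _ _ => rfl
  have star_def : ∀ x : Octonion, star x = (star x.1, -x.2) := fun _ => rfl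
  have one_def : (1 : Octonion) = ((1 : ℍ[ℝ]), (0 : ℍ[ℝ])) := rfl
  have sub_def : ∀ x y : Octonion, x - y = (x.1 - y.1, x.2 - y.2) := fun _ _ => rfl
  have neg_def : ∀ x : Octonion, -x = (-x.1, -x.2) := fun _ => rfl
  have mul_fst : ∀ x y : Octonion, (x * y).1 = x.1 * y.1 - star y.2 * x.2 := fun _ _ => rfl
  have mul_snd : ∀ x y : Octonion, (x * y).2 = y.2 * x.1 + x.2 * star y.1 := fun _ _ => rfl
  have star_fst : ∀ x : Octonion, (star x).1 = star x.1 := fun _ => rfl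
  have star_snd : ∀ x : Octonion, (star x).2 = -x.2 := fun _ => rfl
  have one_fst : (1 : Octonion).1 = 1 := rfl
  have one_snd : (1 : Octonion).2 = 0 := rfl
  have sub_fst : ∀ x y : Octonion, (x - y).1 = x.1 - y.1 := fun _ _ => rfl
  have sub_snd : ∀ x y : Octonion, (x - y).2 = x.2 - y.2 := fun _ _ => rfl
  have neg_fst : ∀ x : Octonion, (-x).1 = -x.1 := fun _ => rfl
  have neg_snd : ∀ x : Octonion, (-x).2 = -x.2 := fun _ => rfl
  constructor
  · intro m
    refine Prod.ext ?_ ?_ <;> simp [one_fst, one_snd, star_fst, star_snd, mul_fst, mul_snd]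
  · intro p q m
    refine Prod.ext ?_ ?_ <;>
    · ext <;>
      simp only [mul_fst, mul_snd, star_fst, star_snd, sub_fst, sub_snd, neg_fst, neg_snd,
        Quaternion.ext_iff, Quaternion.re_sub, Quaternion.imI_sub,
        Quaternion.imJ_sub, Quaternion.imK_sub, Quaternion.re_neg,
        Quaternion.imI_neg, Quaternion.imJ_neg, Quaternion.imK_neg,
        Quaternion.re_mul, Quaternion.imI_mul, Quaternion.imJ_mul,
        Quaternion.imK_mul, Quaternion.re_add, Quaternion.imI_add,
        Quaternion.imJ_add, Quaternion.imK_add, Quaternion.re_star, Quaternion.imI_star,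
        Quaternion.imJ_star, Quaternion.imK_star] <;>
      ring
end
end

section
/- Let M be an 𝕆-bimodule and m ∈ M an associative element (i.e., [p,q,m] = 0 for all p,q ∈ 𝕆). Then for all octonions u, v, w: [u, v, mw] = m·[u,v,w], and u(v(mw)) = (uv)(mw) - m[u,v,w]. -/
noncomputable section

open Quaternion

namespace Octonion

lemma sub_def' (x y : Octonion) : x - y = (x.1 - y.1, x.2 - y.2) := rfl

set_option maxHeartbeats 2000000 in
lemma assoc_cyclic' (u v w : Octonion) : assoc u v w = w * u * v - w * (u * v) := by
  show assoc u v w = assoc w u v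
  rw [assoc, assoc, sub_def', sub_def', mul_def' (u * v) w, mul_def' u (v * w),
    mul_def' (w * u) v, mul_def' w (u * v), mul_def' u v, mul_def' v w, mul_def' w u]
  obtain ⟨a, b⟩ := u; obtain ⟨c, d⟩ := v; obtain ⟨p, q⟩ := w
  refine Prod.ext ?_ ?_ <;> dsimp only <;>
  · ext <;>
    simp only [Quaternion.re_mul, Quaternion.imI_mul, Quaternion.imJ_mul,
      Quaternion.imK_mul, Quaternion.re_sub, Quaternion.imI_sub, Quaternion.imJ_sub,
      Quaternion.imK_sub, Quaternion.re_add, Quaternion.imI_add, Quaternion.imJ_add,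
      Quaternion.imK_add, Quaternion.re_star, Quaternion.imI_star, Quaternion.imJ_star,
      Quaternion.imK_star] <;> ring

end Octonion

/-- For an associative element `m` of an `𝕆`-bimodule:
`[u,v,mw] = m·[u,v,w]` and `u(v(mw)) = (uv)(mw) - m[u,v,w]`. -/
theorem bimodule_assoc_elt_assoc_formula {M : Type} [AddCommGroup M] [Module ℝ M]
    (B : OBimodule M) (m : M)
    (hm : ∀ p q : Octonion, B.l (p * q) m = B.l p (B.l q m))
    (u v w : Octonion) :
    B.l (u * v) (B.r w m) - B.l u (B.l v (B.r w m)) = B.r (Octonion.assoc u v w) m ∧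
    B.l u (B.l v (B.r w m)) = B.l (u * v) (B.r w m) - B.r (Octonion.assoc u v w) m := by
  have hr : ∀ p q : Octonion, B.r q (B.r p m) = B.r (p * q) m := by
    intro p q
    have h := B.comp_rm p q m
    rw [hm p q, sub_self] at h
    exact sub_eq_zero.mp h.symm
  have h1 : B.l (u * v) (B.r w m) - B.l u (B.l v (B.r w m)) =
      B.r (Octonion.assoc u v w) m := by
    rw [B.comp_rm u v (B.r w m), hr w u, hr (w * u) v, hr w (u * v),
      Octonion.assoc_cyclic' u v w, map_sub, LinearMap.sub_apply]
  exact ⟨h1, by rw [← h1]; abel⟩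
end
end

section
/- Let M be an 𝕆-bimodule and m an associative element of M. Then pm = mp for every octonion p. -/
noncomputable section

open Quaternion

namespace OctonionAux

open Octonion

lemma mul_def (x y : Octonion) :
    x * y = (x.1 * y.1 - star y.2 * x.2, y.2 * x.1 + x.2 * star y.1) := rfl
lemma sub_def (x y : Octonion) : x - y = (x.1 - y.1, x.2 - y.2) := rfl
lemma add_def (x y : Octonion) : x + y = (x.1 + y.1, x.2 + y.2) := rfl
lemma neg_def (x : Octonion) : -x = (-x.1, -x.2) := rfl
lemma smul_def (c : ℝ) (x : Octonion) : c • x = (c • x.1, c • x.2) := rfl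
lemma one_def : (1 : Octonion) = ((1 : ℍ[ℝ]), (0 : ℍ[ℝ])) := rfl
def qmk (a b c d : ℝ) : ℍ[ℝ] := ⟨a, b, c, d⟩
lemma qmk_eq (a b c d : ℝ) : (⟨a, b, c, d⟩ : ℍ[ℝ]) = qmk a b c d := rfl
@[simp] lemma qmk_re (a b c d : ℝ) : (qmk a b c d).re = a := rfl
@[simp] lemma qmk_imI (a b c d : ℝ) : (qmk a b c d).imI = b := rfl
@[simp] lemma qmk_imJ (a b c d : ℝ) : (qmk a b c d).imJ = c := rfl
@[simp] lemma qmk_imK (a b c d : ℝ) : (qmk a b c d).imK = d := rfl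
lemma mul_mk (p q : ℍ[ℝ] × ℍ[ℝ]) :
    @HMul.hMul Octonion Octonion Octonion _ p q = (p.1 * q.1 - star q.2 * p.2, q.2 * p.1 + p.2 * star q.1) := rfl
lemma sub_mk (p q : ℍ[ℝ] × ℍ[ℝ]) : @HSub.hSub Octonion Octonion Octonion _ p q = (p.1 - q.1, p.2 - q.2) := rfl
lemma add_mk (p q : ℍ[ℝ] × ℍ[ℝ]) : @HAdd.hAdd Octonion Octonion Octonion _ p q = (p.1 + q.1, p.2 + q.2) := rfl
lemma neg_mk (p : ℍ[ℝ] × ℍ[ℝ]) : @Neg.neg Octonion _ p = (-p.1, -p.2) := rfl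
lemma smul_mk (r : ℝ) (p : ℍ[ℝ] × ℍ[ℝ]) : @HSMul.hSMul ℝ Octonion Octonion _ r p = (r • p.1, r • p.2) := rfl

lemma oct0 : e 1 * e 3 * e 6 - e 1 * (e 3 * e 6) = -(e 0 + e 0) := by
  simp only [mul_def, sub_def, add_def, neg_def, e, mul_mk, sub_mk, add_mk, neg_mk]
  apply Prod.ext_iff.mpr
  constructor <;>
  · ext <;>
      simp [QuaternionAlgebra.ext_iff, qmk_eq, Quaternion.re_mul, Quaternion.imI_mul,
        Quaternion.imJ_mul, Quaternion.imK_mul, sub_eq_add_neg]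

lemma oct1 : e 0 * e 3 * e 6 - e 0 * (e 3 * e 6) = e 1 + e 1 := by
  simp only [mul_def, sub_def, add_def, neg_def, e, mul_mk, sub_mk, add_mk, neg_mk]
  apply Prod.ext_iff.mpr
  constructor <;>
  · ext <;>
      simp [QuaternionAlgebra.ext_iff, qmk_eq, Quaternion.re_mul, Quaternion.imI_mul,
        Quaternion.imJ_mul, Quaternion.imK_mul, sub_eq_add_neg]

lemma oct2 : e 0 * e 3 * e 5 - e 0 * (e 3 * e 5) = -(e 2 + e 2) := by
  simp only [mul_def, sub_def, add_def, neg_def, e, mul_mk, sub_mk, add_mk, neg_mk]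
  apply Prod.ext_iff.mpr
  constructor <;>
  · ext <;>
      simp [QuaternionAlgebra.ext_iff, qmk_eq, Quaternion.re_mul, Quaternion.imI_mul,
        Quaternion.imJ_mul, Quaternion.imK_mul, sub_eq_add_neg]

lemma oct3 : e 0 * e 1 * e 6 - e 0 * (e 1 * e 6) = -(e 3 + e 3) := by
  simp only [mul_def, sub_def, add_def, neg_def, e, mul_mk, sub_mk, add_mk, neg_mk]
  apply Prod.ext_iff.mpr
  constructor <;>
  · ext <;>
      simp [QuaternionAlgebra.ext_iff, qmk_eq, Quaternion.re_mul, Quaternion.imI_mul,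
        Quaternion.imJ_mul, Quaternion.imK_mul, sub_eq_add_neg]

lemma oct4 : e 0 * e 1 * e 5 - e 0 * (e 1 * e 5) = e 4 + e 4 := by
  simp only [mul_def, sub_def, add_def, neg_def, e, mul_mk, sub_mk, add_mk, neg_mk]
  apply Prod.ext_iff.mpr
  constructor <;>
  · ext <;>
      simp [QuaternionAlgebra.ext_iff, qmk_eq, Quaternion.re_mul, Quaternion.imI_mul,
        Quaternion.imJ_mul, Quaternion.imK_mul, sub_eq_add_neg]

lemma oct5 : e 0 * e 1 * e 4 - e 0 * (e 1 * e 4) = -(e 5 + e 5) := by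
  simp only [mul_def, sub_def, add_def, neg_def, e, mul_mk, sub_mk, add_mk, neg_mk]
  apply Prod.ext_iff.mpr
  constructor <;>
  · ext <;>
      simp [QuaternionAlgebra.ext_iff, qmk_eq, Quaternion.re_mul, Quaternion.imI_mul,
        Quaternion.imJ_mul, Quaternion.imK_mul, sub_eq_add_neg]

lemma oct6 : e 0 * e 1 * e 3 - e 0 * (e 1 * e 3) = e 6 + e 6 := by
  simp only [mul_def, sub_def, add_def, neg_def, e, mul_mk, sub_mk, add_mk, neg_mk]
  apply Prod.ext_iff.mpr
  constructor <;>
  · ext <;>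
      simp [QuaternionAlgebra.ext_iff, qmk_eq, Quaternion.re_mul, Quaternion.imI_mul,
        Quaternion.imJ_mul, Quaternion.imK_mul, sub_eq_add_neg]

/-- Decomposition of an arbitrary octonion into the standard basis. -/
lemma decomp (x : Octonion) :
    x = x.1.re • (1 : Octonion) + x.1.imI • e 0 + x.1.imJ • e 1 + x.1.imK • e 2
      + x.2.re • e 3 + x.2.imI • e 4 + x.2.imJ • e 5 + x.2.imK • e 6 := by
  simp only [smul_def, add_def, one_def, e, smul_mk, add_mk]
  apply Prod.ext_iff.mpr
  constructor <;>
  · ext <;> simp [qmk_eq]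

end OctonionAux

open OctonionAux Octonion in
/-- An associative element of an `𝕆`-bimodule commutes with every octonion. -/
theorem bimodule_assoc_elt_central {M : Type} [AddCommGroup M] [Module ℝ M]
    (B : OBimodule M) (m : M)
    (hm : ∀ p q : Octonion, B.l (p * q) m = B.l p (B.l q m)) :
    ∀ p : Octonion, B.l p m = B.r p m := by
  have hb : ∀ p q : Octonion, B.r q (B.r p m) = B.r (p * q) m := by
    intro p q
    have h := B.comp_rm p q m
    rw [hm, sub_self] at h
    exact sub_eq_zero.mp h.symm
  have hc : ∀ p q : Octonion, B.r p (B.l q m) = B.l q (B.r p m) := by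
    intro p q
    have h := B.comp_lm p q m
    rw [hm, sub_self] at h
    exact sub_eq_zero.mp h.symm
  have hV : ∀ (p q : Octonion) (x : M),
      B.r p (B.l q x) - B.l q (B.r p x) = B.r q (B.r p x) - B.r (p * q) x :=
    fun p q x => (B.comp_lm p q x).symm.trans (B.comp_rm p q x)
  have key : ∀ p q s : Octonion,
      B.l (p * q * s) m - B.l (p * (q * s)) m = B.r (p * q * s) m - B.r (p * (q * s)) m := by
    intro p q s
    have h1 := B.comp_lm p q (B.l s m)
    rw [← hm q s, ← hm (p * q) s, ← hm p (q * s), hc p (q * s), hc p s] at h1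
    have h2 := B.comp_lm q s (B.r p m)
    rw [hb p q] at h2
    have h3 := hV q s (B.r p m)
    rw [hb p q, hb (p * q) s, hb p (q * s)] at h3
    exact h1.trans (h2.trans h3)
  have keysub : ∀ p q s : Octonion,
      B.l (p * q * s - p * (q * s)) m = B.r (p * q * s - p * (q * s)) m := by
    intro p q s
    simpa only [map_sub, LinearMap.sub_apply] using key p q s
  have double : ∀ a : Octonion, B.l (a + a) m = B.r (a + a) m → B.l a m = B.r a m := by
    intro a h
    have h2 : (2 : ℝ) • B.l a m = (2 : ℝ) • B.r a m := by
      rw [two_smul, two_smul]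
      simpa only [map_add, LinearMap.add_apply] using h
    exact smul_right_injective M two_ne_zero h2
  have hneg : ∀ a : Octonion, B.l (-a) m = B.r (-a) m → B.l a m = B.r a m := by
    intro a h
    have := h
    rw [map_neg, map_neg, LinearMap.neg_apply, LinearMap.neg_apply] at this
    exact neg_injective this
  have he : ∀ t : Fin 7, B.l (e t) m = B.r (e t) m := by
    intro t
    fin_cases t
    · exact double (e 0) (hneg _ (by simpa only [oct0] using keysub (e 1) (e 3) (e 6)))
    · exact double (e 1) (by simpa only [oct1] using keysub (e 0) (e 3) (e 6))
    · exact double (e 2) (hneg _ (by simpa only [oct2] using keysub (e 0) (e 3) (e 5)))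
    · exact double (e 3) (hneg _ (by simpa only [oct3] using keysub (e 0) (e 1) (e 6)))
    · exact double (e 4) (by simpa only [oct4] using keysub (e 0) (e 1) (e 5))
    · exact double (e 5) (hneg _ (by simpa only [oct5] using keysub (e 0) (e 1) (e 4)))
    · exact double (e 6) (by simpa only [oct6] using keysub (e 0) (e 1) (e 3))
  intro p
  rw [decomp p]
  simp only [map_add, map_smul, LinearMap.add_apply, LinearMap.smul_apply]
  rw [B.one_l, B.one_r, he 0, he 1, he 2, he 3, he 4, he 5, he 6]
end
end

section
/- Let m = (p₁,…,pₙ) ∈ 𝕆ⁿ, viewed as an element of the left 𝕆-module 𝕆ⁿ (coordinatewise octonion multiplication). Then the left 𝕆-submodule of 𝕆ⁿ generated by m is isomorphic to 𝕆^{n'}, where n' is the dimension of the real linear span of {p₁,…,pₙ} inside 𝕆 ≅ ℝ⁸. -/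
noncomputable section

open Quaternion

namespace OctonionProof

open Octonion

lemma oct_ext {x y : Octonion} (h1 : x.1 = y.1) (h2 : x.2 = y.2) : x = y :=
  Prod.ext h1 h2

lemma mul_def (x y : Octonion) :
    x * y = (x.1 * y.1 - star y.2 * x.2, y.2 * x.1 + x.2 * star y.1) := rfl

lemma mul_fst (x y : Octonion) : (x * y).1 = x.1 * y.1 - star y.2 * x.2 := rfl
lemma mul_snd (x y : Octonion) : (x * y).2 = y.2 * x.1 + x.2 * star y.1 := rfl

def omk (a b : ℍ[ℝ]) : Octonion := (a, b)
lemma omk_fst (a b : ℍ[ℝ]) : (omk a b).1 = a := rfl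
lemma omk_snd (a b : ℍ[ℝ]) : (omk a b).2 = b := rfl

lemma one_def : (1 : Octonion) = ((1 : ℍ[ℝ]), (0 : ℍ[ℝ])) := rfl

lemma add_fst (x y : Octonion) : (x + y).1 = x.1 + y.1 := rfl
lemma add_snd (x y : Octonion) : (x + y).2 = x.2 + y.2 := rfl
lemma smul_fst (r : ℝ) (x : Octonion) : (r • x).1 = r • x.1 := rfl
lemma smul_snd (r : ℝ) (x : Octonion) : (r • x).2 = r • x.2 := rfl

lemma o_add_mul (x y z : Octonion) : (x + y) * z = x * z + y * z := by
  refine oct_ext ?_ ?_ <;> simp only [add_fst, add_snd] <;>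
    simp only [mul_def, add_fst, add_snd] <;> noncomm_ring

lemma o_mul_add (x y z : Octonion) : x * (y + z) = x * y + x * z := by
  refine oct_ext ?_ ?_ <;> simp only [add_fst, add_snd] <;>
    simp only [mul_def, add_fst, add_snd, star_add] <;> noncomm_ring

lemma o_smul_mul (r : ℝ) (x y : Octonion) : (r • x) * y = r • (x * y) := by
  refine oct_ext ?_ ?_ <;> simp only [smul_fst, smul_snd] <;>
    simp only [mul_def, smul_fst, smul_snd, smul_sub, smul_add,
      mul_smul_comm, smul_mul_assoc]

lemma o_mul_smul (r : ℝ) (x y : Octonion) : x * (r • y) = r • (x * y) := by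
  refine oct_ext ?_ ?_ <;> simp only [smul_fst, smul_snd] <;>
    simp only [mul_def, smul_fst, smul_snd, Quaternion.star_smul, smul_sub, smul_add,
      mul_smul_comm, smul_mul_assoc]

lemma o_mul_one (x : Octonion) : x * 1 = x := by
  refine oct_ext ?_ ?_ <;> rw [mul_def] <;> simp [one_def]

lemma o_one_mul (x : Octonion) : 1 * x = x := by
  refine oct_ext ?_ ?_ <;> rw [mul_def] <;> simp [one_def]

/-- Left multiplication, as a bilinear map. -/
def Lm : Octonion →ₗ[ℝ] Module.End ℝ Octonion where
  toFun a :=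
    { toFun := fun x => a * x
      map_add' := fun x y => o_mul_add a x y
      map_smul' := fun r x => o_mul_smul r a x }
  map_add' a b := LinearMap.ext fun x => o_add_mul a b x
  map_smul' r a := LinearMap.ext fun x => o_smul_mul r a x

@[simp] lemma Lm_apply (a x : Octonion) : Lm a x = a * x := rfl

/-! The three commuting involutions built from left multiplications, and the
rank-one projection onto the real axis. -/

/-- `e₁ = (i, 0)` -/
def u0 : Octonion := ((⟨0,1,0,0⟩ : ℍ[ℝ]), 0)
/-- `e₂ = (j, 0)` -/
def u1 : Octonion := ((⟨0,0,1,0⟩ : ℍ[ℝ]), 0)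
/-- `e₃ = (k, 0)` -/
def u2 : Octonion := ((⟨0,0,0,1⟩ : ℍ[ℝ]), 0)
/-- `e₄ = (0, 1)` -/
def u3 : Octonion := (0, (1 : ℍ[ℝ]))
/-- `e₅ = (0, i)` -/
def u4 : Octonion := (0, (⟨0,1,0,0⟩ : ℍ[ℝ]))
/-- `e₆ = (0, j)` -/
def u5 : Octonion := (0, (⟨0,0,1,0⟩ : ℍ[ℝ]))

lemma S1x (x : Octonion) : u0 * (u2 * (u1 * x)) = omk x.1 (-x.2) := by
  refine oct_ext ?_ ?_ <;>
  · simp only [mul_fst, mul_snd, omk_fst, omk_snd]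
    apply Quaternion.ext <;> simp only [Quaternion.re_mul, Quaternion.imI_mul, Quaternion.imJ_mul, Quaternion.imK_mul, Quaternion.re_add, Quaternion.imI_add, Quaternion.imJ_add, Quaternion.imK_add, Quaternion.re_sub, Quaternion.imI_sub, Quaternion.imJ_sub, Quaternion.imK_sub, Quaternion.re_neg, Quaternion.imI_neg, Quaternion.imJ_neg, Quaternion.imK_neg, Quaternion.re_star, Quaternion.imI_star, Quaternion.imJ_star, Quaternion.imK_star] <;> simp [u0, u1, u2] <;> ring

lemma S2x (x : Octonion) : u0 * (u4 * (u3 * x)) =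
    omk (⟨x.1.re, x.1.imI, -x.1.imJ, -x.1.imK⟩ : ℍ[ℝ])
     (⟨x.2.re, x.2.imI, -x.2.imJ, -x.2.imK⟩ : ℍ[ℝ]) := by
  refine oct_ext ?_ ?_ <;>
  · simp only [mul_fst, mul_snd, omk_fst, omk_snd]
    apply Quaternion.ext <;> simp only [Quaternion.re_mul, Quaternion.imI_mul, Quaternion.imJ_mul, Quaternion.imK_mul, Quaternion.re_add, Quaternion.imI_add, Quaternion.imJ_add, Quaternion.imK_add, Quaternion.re_sub, Quaternion.imI_sub, Quaternion.imJ_sub, Quaternion.imK_sub, Quaternion.re_neg, Quaternion.imI_neg, Quaternion.imJ_neg, Quaternion.imK_neg, Quaternion.re_star, Quaternion.imI_star, Quaternion.imJ_star, Quaternion.imK_star] <;> dsimp only [omk] <;> simp [u0, u3, u4] <;> ring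

lemma S3x (x : Octonion) : u1 * (u5 * (u3 * x)) =
    omk (⟨x.1.re, -x.1.imI, x.1.imJ, -x.1.imK⟩ : ℍ[ℝ])
     (⟨x.2.re, -x.2.imI, x.2.imJ, -x.2.imK⟩ : ℍ[ℝ]) := by
  refine oct_ext ?_ ?_ <;>
  · simp only [mul_fst, mul_snd, omk_fst, omk_snd]
    apply Quaternion.ext <;> simp only [Quaternion.re_mul, Quaternion.imI_mul, Quaternion.imJ_mul, Quaternion.imK_mul, Quaternion.re_add, Quaternion.imI_add, Quaternion.imJ_add, Quaternion.imK_add, Quaternion.re_sub, Quaternion.imI_sub, Quaternion.imJ_sub, Quaternion.imK_sub, Quaternion.re_neg, Quaternion.imI_neg, Quaternion.imJ_neg, Quaternion.imK_neg, Quaternion.re_star, Quaternion.imI_star, Quaternion.imJ_star, Quaternion.imK_star] <;> dsimp only [omk] <;> simp [u1, u3, u5] <;> ring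

/-- Projection onto the real axis, inside the algebra generated by left
multiplications. -/
def Tend : Module.End ℝ Octonion :=
  (8 : ℝ)⁻¹ • ((1 + Lm u0 * Lm u2 * Lm u1) *
    ((1 + Lm u0 * Lm u4 * Lm u3) * (1 + Lm u1 * Lm u5 * Lm u3)))

lemma Tend_apply (x : Octonion) : Tend x = x.1.re • (1 : Octonion) := by
  have expand : Tend x = (8 : ℝ)⁻¹ •
      (((x + u1 * (u5 * (u3 * x)) + (u0 * (u4 * (u3 * x)) + u0 * (u4 * (u3 * (u1 * (u5 * (u3 * x))))))) +
        (u0 * (u2 * (u1 * x)) + u0 * (u2 * (u1 * (u1 * (u5 * (u3 * x))))) +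
          (u0 * (u2 * (u1 * (u0 * (u4 * (u3 * x))))) +
            u0 * (u2 * (u1 * (u0 * (u4 * (u3 * (u1 * (u5 * (u3 * x)))))))))))) := by
    simp only [Tend, LinearMap.smul_apply, Module.End.mul_apply, LinearMap.add_apply,
      Module.End.one_apply, Lm_apply, o_mul_add]
  rw [expand, S3x, S2x, S1x, S2x, S1x, S1x, S1x]
  refine oct_ext ?_ ?_ <;>
  · simp only [smul_fst, smul_snd, add_fst, add_snd, omk_fst, omk_snd]
    apply Quaternion.ext <;> simp only [Quaternion.re_add, Quaternion.imI_add, Quaternion.imJ_add,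
      Quaternion.imK_add, Quaternion.re_smul, Quaternion.imI_smul, Quaternion.imJ_smul,
      Quaternion.imK_smul, Quaternion.re_neg, Quaternion.imI_neg, Quaternion.imJ_neg,
      Quaternion.imK_neg] <;> dsimp only [omk, one_def] <;> simp <;> ring

instance : Module.Finite ℝ Octonion := inferInstanceAs (Module.Finite ℝ (ℍ[ℝ] × ℍ[ℝ]))

/-- The pairing `b ↦ (x ↦ Re (b x))`, as a map to the dual. -/
def pair : Octonion →ₗ[ℝ] Module.Dual ℝ Octonion where
  toFun b :=
    { toFun := fun x => ((b * x).1).re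
      map_add' := fun x y => by simp [o_mul_add, add_fst]
      map_smul' := fun r x => by simp [o_mul_smul, smul_fst] }
  map_add' a b := by ext x; simp [o_add_mul, add_fst]
  map_smul' r a := by ext x; simp [o_smul_mul, smul_fst]

lemma pair_injective : Function.Injective pair := by
  rw [← LinearMap.ker_eq_bot, LinearMap.ker_eq_bot']
  intro b hb
  let y : Octonion := ((star b.1, -b.2) : ℍ[ℝ] × ℍ[ℝ])
  have h := congrArg (fun f : Module.Dual ℝ Octonion => f y) hb
  simp only [pair, LinearMap.coe_mk, AddHom.coe_mk, LinearMap.zero_apply] at h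
  have hb1 : (b * y).1 = b.1 * star b.1 + star b.2 * b.2 := by
    simp [mul_def]
    show b.1 * star b.1 - star (-b.2) * b.2 = _
    simp
  rw [hb1] at h
  simp only [Quaternion.re_add, Quaternion.self_mul_star, Quaternion.star_mul_self,
    Quaternion.re_coe] at h
  have h1 : Quaternion.normSq b.1 = 0 ∧ Quaternion.normSq b.2 = 0 := by
    constructor <;> nlinarith [Quaternion.normSq_nonneg (a := b.1),
      Quaternion.normSq_nonneg (a := b.2)]
  refine oct_ext ?_ ?_
  · exact Quaternion.normSq_eq_zero.mp h1.1
  · exact Quaternion.normSq_eq_zero.mp h1.2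

lemma pair_surjective : Function.Surjective pair :=
  (LinearMap.injective_iff_surjective_of_finrank_eq_finrank
    (Subspace.dual_finrank_eq (V := Octonion)).symm).mp pair_injective

lemma pair_apply (b x : Octonion) : pair b x = ((b * x).1).re := rfl

/-- Every real-linear endomorphism of `𝕆` is a sum of maps
`x ↦ a * Re(b * x)`, built from left multiplications and `Tend`. -/
lemma endo_decomp (A : Module.End ℝ Octonion) :
    ∃ a b : Fin (Module.finrank ℝ Octonion) → Octonion,
      A = ∑ j, Lm (a j) * Tend * Lm (b j) := by
  classical
  let c := Module.finBasis ℝ Octonion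
  choose bb hbb using fun j => pair_surjective (c.coord j)
  refine ⟨fun j => A (c j), bb, ?_⟩
  apply LinearMap.ext; intro x
  have hrepr : A x = ∑ j, c.repr x j • A (c j) := by
    conv_lhs => rw [← c.sum_repr x]
    simp only [map_sum, map_smul]
  rw [hrepr, LinearMap.sum_apply]
  refine Finset.sum_congr rfl fun j _ => ?_
  simp only [Module.End.mul_apply, Lm_apply]
  rw [Tend_apply, o_mul_smul, o_mul_one,
    show ((bb j * x).1).re = pair (bb j) x from rfl, hbb j, Module.Basis.coord_apply]

end OctonionProof

/-- The left `𝕆`-submodule of `𝕆ⁿ` generated by `m = (p₁,…,pₙ)` is isomorphic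
to `𝕆^{n'}`, where `n'` is the real rank of `{p₁,…,pₙ}` inside `𝕆 ≅ ℝ⁸`. -/
theorem cyclic_submodule_of_pow (n : ℕ) (p : Fin n → Octonion) :
    let N : Submodule ℝ (Fin n → Octonion) :=
      sInf {S : Submodule ℝ (Fin n → Octonion) |
        p ∈ S ∧ ∀ q : Octonion, ∀ x ∈ S, (fun i => q * x i) ∈ S}
    let n' : ℕ := Module.finrank ℝ (Submodule.span ℝ (Set.range p))
    ∃ φ : N ≃ₗ[ℝ] (Fin n' → Octonion),
      ∀ (q : Octonion) (x : N)
        (hx : (fun i => q * (x : Fin n → Octonion) i) ∈ N),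
        φ ⟨fun i => q * (x : Fin n → Octonion) i, hx⟩ = fun i => q * φ x i := by
  intro N n'
  classical
  open OctonionProof in
  -- closure properties of `N`
  have hpN : p ∈ N := Submodule.mem_sInf.2 fun S hS => hS.1
  have hclosed : ∀ (q : Octonion), ∀ x ∈ N, (fun i => q * x i) ∈ N := fun q x hx =>
    Submodule.mem_sInf.2 fun S hS => hS.2 q x (Submodule.mem_sInf.1 hx S hS)
  -- the evaluation maps
  let Ψ : Module.End ℝ Octonion →ₗ[ℝ] (Fin n → Octonion) :=
    { toFun := fun A i => A (p i)
      map_add' := fun A B => rfl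
      map_smul' := fun r A => rfl }
  let V : Submodule ℝ Octonion := Submodule.span ℝ (Set.range p)
  let b : Module.Basis (Fin n') ℝ V := Module.finBasis ℝ V
  let Ψ' : Module.End ℝ Octonion →ₗ[ℝ] (Fin n' → Octonion) :=
    { toFun := fun A j => A (b j : Octonion)
      map_add' := fun A B => rfl
      map_smul' := fun r A => rfl }
  -- every endomorphism acts on `N` coordinatewise
  have P_comp : ∀ A B : Module.End ℝ Octonion,
      (∀ x ∈ N, (fun i => A (x i)) ∈ N) → (∀ x ∈ N, (fun i => B (x i)) ∈ N) →
      ∀ x ∈ N, (fun i => (A * B) (x i)) ∈ N := by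
    intro A B hA hB x hx
    have h : (fun i => (A * B) (x i)) = fun i => A ((fun i' => B (x i')) i) := by
      funext i; simp only [Module.End.mul_apply]
    rw [h]
    exact hA _ (hB x hx)
  have P_Lm : ∀ q : Octonion, ∀ x ∈ N, (fun i => Lm q (x i)) ∈ N := fun q x hx =>
    hclosed q x hx
  have P_one : ∀ x ∈ N, (fun i => (1 : Module.End ℝ Octonion) (x i)) ∈ N := by
    intro x hx
    have h : (fun i => (1 : Module.End ℝ Octonion) (x i)) = x := rfl
    rw [h]; exact hx
  have P_add : ∀ A B : Module.End ℝ Octonion,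
      (∀ x ∈ N, (fun i => A (x i)) ∈ N) → (∀ x ∈ N, (fun i => B (x i)) ∈ N) →
      ∀ x ∈ N, (fun i => (A + B) (x i)) ∈ N := by
    intro A B hA hB x hx
    have h : (fun i => (A + B) (x i)) = (fun i => A (x i)) + fun i => B (x i) := rfl
    rw [h]; exact Submodule.add_mem _ (hA x hx) (hB x hx)
  have P_smul : ∀ (r : ℝ) (A : Module.End ℝ Octonion),
      (∀ x ∈ N, (fun i => A (x i)) ∈ N) →
      ∀ x ∈ N, (fun i => (r • A) (x i)) ∈ N := by
    intro r A hA x hx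
    have h : (fun i => (r • A) (x i)) = r • fun i => A (x i) := rfl
    rw [h]; exact Submodule.smul_mem _ _ (hA x hx)
  have P_Tend : ∀ x ∈ N, (fun i => Tend (x i)) ∈ N := by
    unfold OctonionProof.Tend
    exact P_smul _ _ (P_comp _ _
      (P_add _ _ P_one (P_comp _ _ (P_comp _ _ (P_Lm _) (P_Lm _)) (P_Lm _)))
      (P_comp _ _ (P_add _ _ P_one (P_comp _ _ (P_comp _ _ (P_Lm _) (P_Lm _)) (P_Lm _)))
        (P_add _ _ P_one (P_comp _ _ (P_comp _ _ (P_Lm _) (P_Lm _)) (P_Lm _)))))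
  have key : ∀ A : Module.End ℝ Octonion, ∀ x ∈ N, (fun i => A (x i)) ∈ N := by
    intro A
    obtain ⟨a, bb, hab⟩ := endo_decomp A
    rw [hab]
    intro x hx
    have hs : (fun i => (∑ j, Lm (a j) * Tend * Lm (bb j)) (x i))
        = ∑ j, (fun i => (Lm (a j) * Tend * Lm (bb j)) (x i)) := by
      funext i
      rw [LinearMap.sum_apply, Finset.sum_apply]
    rw [hs]
    exact Submodule.sum_mem _ fun j _ =>
      P_comp _ _ (P_comp _ _ (P_Lm _) P_Tend) (P_Lm _) x hx
  -- `N` is the range of `Ψ`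
  have hNr : N = LinearMap.range Ψ := by
    apply le_antisymm
    · refine sInf_le ⟨⟨1, rfl⟩, ?_⟩
      rintro q x ⟨A, rfl⟩
      refine ⟨Lm q * A, ?_⟩
      funext i
      show (Lm q * A) (p i) = q * A (p i)
      simp only [Module.End.mul_apply, Lm_apply]
    · rintro x ⟨A, rfl⟩
      exact key A p hpN
  -- the two kernels agree
  have hker : LinearMap.ker Ψ = LinearMap.ker Ψ' := by
    ext A
    simp only [LinearMap.mem_ker]
    constructor
    · intro hA
      have hV : V ≤ LinearMap.ker A := by
        rw [Submodule.span_le]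
        rintro _ ⟨i, rfl⟩
        exact congrFun hA i
      funext j
      exact hV (b j).2
    · intro hA
      have hcomp : A ∘ₗ V.subtype = 0 := b.ext fun j => congrFun hA j
      funext i
      have hpi : p i ∈ V := Submodule.subset_span (Set.mem_range_self i)
      exact congrFun (congrArg DFunLike.coe hcomp) ⟨p i, hpi⟩
  -- `Ψ'` is surjective
  have hsurj : Function.Surjective Ψ' := by
    intro w
    obtain ⟨W, hW⟩ := Submodule.exists_isCompl V
    refine ⟨(b.constr ℝ w) ∘ₗ (V.projectionOnto W hW), ?_⟩
    funext j
    show (b.constr ℝ w) (V.projectionOnto W hW (b j : Octonion)) = w j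
    rw [Submodule.projectionOnto_apply_left, b.constr_basis]
  -- assemble the equivalence
  let φ : N ≃ₗ[ℝ] (Fin n' → Octonion) :=
    (LinearEquiv.ofEq N (LinearMap.range Ψ) hNr).trans
      (Ψ.quotKerEquivRange.symm.trans
        ((Submodule.quotEquivOfEq _ _ hker).trans
          (Ψ'.quotKerEquivRange.trans
            (LinearEquiv.ofTop _ (LinearMap.range_eq_top.2 hsurj)))))
  have hφ : ∀ (A : Module.End ℝ Octonion) (h : Ψ A ∈ N), φ ⟨Ψ A, h⟩ = Ψ' A := by
    intro A h
    have h0 : (LinearEquiv.ofEq N (LinearMap.range Ψ) hNr) ⟨Ψ A, h⟩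
        = ⟨Ψ A, LinearMap.mem_range_self Ψ A⟩ := rfl
    have h1 : Ψ.quotKerEquivRange.symm ⟨Ψ A, LinearMap.mem_range_self Ψ A⟩
        = (LinearMap.ker Ψ).mkQ A := Ψ.quotKerEquivRange_symm_apply_image A _
    show (LinearEquiv.ofTop _ (LinearMap.range_eq_top.2 hsurj))
        (Ψ'.quotKerEquivRange
          ((Submodule.quotEquivOfEq _ _ hker)
            (Ψ.quotKerEquivRange.symm
              ((LinearEquiv.ofEq N (LinearMap.range Ψ) hNr) ⟨Ψ A, h⟩)))) = Ψ' A
    rw [h0, h1]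
    show (LinearEquiv.ofTop _ (LinearMap.range_eq_top.2 hsurj))
        (Ψ'.quotKerEquivRange
          ((Submodule.quotEquivOfEq _ _ hker) (Submodule.Quotient.mk A))) = Ψ' A
    rw [Submodule.quotEquivOfEq_mk]
    rw [LinearEquiv.ofTop_apply, Ψ'.quotKerEquivRange_apply_mk]
  refine ⟨φ, ?_⟩
  intro q x hx
  obtain ⟨A, hA⟩ : ∃ A, Ψ A = (x : Fin n → Octonion) :=
    LinearMap.mem_range.mp (hNr.le x.2)
  have hxA : x = ⟨Ψ A, by rw [hA]; exact x.2⟩ := Subtype.ext hA.symm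
  have hqA : Ψ (Lm q * A) = fun i => q * (x : Fin n → Octonion) i := by
    funext i
    show (Lm q * A) (p i) = q * (x : Fin n → Octonion) i
    rw [← hA]
    show (Lm q * A) (p i) = q * A (p i)
    simp only [Module.End.mul_apply, Lm_apply]
  have h2 : (⟨fun i => q * (x : Fin n → Octonion) i, hx⟩ : N)
      = ⟨Ψ (Lm q * A), by rw [hqA]; exact hx⟩ := Subtype.ext hqA.symm
  rw [h2, hφ, hxA, hφ]
  funext j
  show (Lm q * A) (b j : Octonion) = q * A (b j : Octonion)
  simp only [Module.End.mul_apply, Lm_apply]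
end
end
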